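/- For any x, y ∈ ℝ^m, ‖softmax(x) − softmax(y)‖₁ ≤ ‖x − y‖_∞, where softmax(u)_i = exp(u_i)/∑_j exp(u_j). Equivalently, the softmax map is 1-Lipschitz from (ℝ^m, ℓ∞) to (ℝ^m, ℓ¹). -/

import Mathlib

open Real Finset

lemma softmax_aux_sum (m : ℕ) (s v : Fin m → ℝ) (d : ℝ) (hd : 0 ≤ d)
    (hs : ∀ i, 0 ≤ s i) (hs1 : ∑ i, s i = 1) (hv : ∀ i, |v i| ≤ d) :
    ∑ i, s i * |v i - ∑ j, s j * v j| ≤ d := by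
  set t := ∑ j, s j * v j with ht
  have htle : |t| ≤ d := by
    calc |t| ≤ ∑ j, |s j * v j| := Finset.abs_sum_le_sum_abs _ _
    _ ≤ ∑ j, s j * d := by
        apply Finset.sum_le_sum
        intro j _
        rw [abs_mul, abs_of_nonneg (hs j)]
        exact mul_le_mul_of_nonneg_left (hv j) (hs j)
    _ = d := by rw [← Finset.sum_mul, hs1, one_mul]
  rcases eq_or_lt_of_le hd with rfl | hd0
  · have hv0 : ∀ i, v i = 0 := fun i => abs_nonpos_iff.mp (hv i)
    have : t = 0 := by simp [ht, hv0]
    simp [this, hv0]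
  · have key : ∀ i, d * (s i * |v i - t|) ≤ s i * (d * d - t * v i) := by
      intro i
      have h1 := hv i
      have h2 := abs_le.mp h1
      have h3 := abs_le.mp htle
      rcases le_or_gt t (v i) with h | h
      · rw [abs_of_nonneg (by linarith)]
        nlinarith [mul_nonneg (mul_nonneg (hs i) (by linarith : (0:ℝ) ≤ d + t))
          (by linarith : (0:ℝ) ≤ d - v i)]
      · rw [abs_of_neg (by linarith)]
        nlinarith [mul_nonneg (mul_nonneg (hs i) (by linarith : (0:ℝ) ≤ d - t))
          (by linarith : (0:ℝ) ≤ d + v i)]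
    have hsum : d * ∑ i, s i * |v i - t| ≤ d * d := by
      calc d * ∑ i, s i * |v i - t| = ∑ i, d * (s i * |v i - t|) := Finset.mul_sum _ _ _
      _ ≤ ∑ i, s i * (d * d - t * v i) := Finset.sum_le_sum fun i _ => key i
      _ = ∑ i, (s i * (d * d) - t * (s i * v i)) := by
          apply Finset.sum_congr rfl; intro i _; ring
      _ = (∑ i, s i) * (d * d) - t * ∑ i, s i * v i := by
          rw [Finset.sum_sub_distrib, ← Finset.sum_mul, ← Finset.mul_sum]
      _ = d * d - t * t := by rw [hs1, one_mul, ← ht]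
      _ ≤ d * d := by nlinarith [sq_nonneg t]
    exact le_of_mul_le_mul_left hsum hd0

/-- Softmax is 1-Lipschitz from `(ℝ^m, ℓ∞)` to `(ℝ^m, ℓ¹)`:
`‖softmax x − softmax y‖₁ ≤ ‖x − y‖_∞`. -/
theorem softmax_lipschitz_linf_to_l1 (m : ℕ) (x y : Fin m → ℝ) :
    let softmax : (Fin m → ℝ) → Fin m → ℝ := fun u i =>
      Real.exp (u i) / ∑ j, Real.exp (u j)
    ∑ i, |softmax x i - softmax y i| ≤ ‖x - y‖ := by
  intro softmax
  rcases Nat.eq_zero_or_pos m with rfl | hm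
  · simpa using norm_nonneg (x - y)
  haveI : Nonempty (Fin m) := Fin.pos_iff_nonempty.mp hm
  set d := ‖x - y‖ with hd'
  have hd : 0 ≤ d := norm_nonneg _
  set v : Fin m → ℝ := fun i => x i - y i with hv'
  have hvi : ∀ i, |v i| ≤ d := fun i => by
    simpa [Real.norm_eq_abs] using norm_le_pi_norm (x - y) i
  set S : ℝ → ℝ := fun t => ∑ j, Real.exp (y j + t * v j) with hS'
  have hSpos : ∀ t, 0 < S t := fun t =>
    Finset.sum_pos (fun j _ => Real.exp_pos _) Finset.univ_nonempty
  set g : ℝ → Fin m → ℝ := fun t i => Real.exp (y i + t * v i) / S t with hg'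
  have hgpos : ∀ t i, 0 < g t i := fun t i => div_pos (Real.exp_pos _) (hSpos t)
  have hgsum : ∀ t, ∑ i, g t i = 1 := fun t => by
    simp only [hg', ← Finset.sum_div]
    exact div_self (ne_of_gt (hSpos t))
  set D : ℝ → Fin m → ℝ := fun t i => g t i * (v i - ∑ j, g t j * v j) with hD'
  have hderiv : ∀ t i, HasDerivAt (fun u => g u i) (D t i) t := by
    intro t i
    have hN : ∀ j, HasDerivAt (fun u : ℝ => Real.exp (y j + u * v j))
        (Real.exp (y j + t * v j) * v j) t := by
      intro j
      have h1 : HasDerivAt (fun u : ℝ => y j + u * v j) (v j) t := by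
        simpa using ((hasDerivAt_id t).mul_const (v j)).const_add (y j)
      exact h1.exp
    have hSd : HasDerivAt S (∑ j, Real.exp (y j + t * v j) * v j) t :=
      HasDerivAt.fun_sum (fun j _ => hN j)
    have h2 : HasDerivAt (fun u => Real.exp (y i + u * v i) / S u) _ t := (hN i).div hSd (ne_of_gt (hSpos t))
    convert h2 using 1
    simp only [hD', hg', div_mul_eq_mul_div, ← Finset.sum_div]
    have hS0 : S t ≠ 0 := ne_of_gt (hSpos t)
    field_simp
  have hbound : ∀ t, ∑ i, |D t i| ≤ d := by
    intro t
    calc ∑ i, |D t i| = ∑ i, g t i * |v i - ∑ j, g t j * v j| := by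
          apply Finset.sum_congr rfl
          intro i _
          simp only [hD', abs_mul, abs_of_pos (hgpos t i)]
    _ ≤ d := softmax_aux_sum m (g t) v d hd (fun i => (hgpos t i).le) (hgsum t) hvi
  set e : (Fin m → ℝ) ≃L[ℝ] PiLp 1 (fun _ : Fin m => ℝ) :=
    (PiLp.continuousLinearEquiv 1 ℝ (fun _ : Fin m => ℝ)).symm with he'
  have hnorm : ∀ w : Fin m → ℝ, ‖e w‖ = ∑ i, |w i| := by
    intro w
    rw [PiLp.norm_eq_sum (p := 1) (by simp)]
    simp only [Real.norm_eq_abs, Real.rpow_natCast, ENNReal.toReal_one, Real.rpow_one, ne_eq,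
      one_ne_zero, not_false_eq_true, div_self, pow_one]
    rfl
  have hG : ∀ t ∈ Set.Icc (0:ℝ) 1,
      HasDerivWithinAt (fun u => e (g u)) (e (D t)) (Set.Icc (0:ℝ) 1) t := by
    intro t _
    exact ((e.toContinuousLinearMap.hasFDerivAt).comp_hasDerivAt t
      (hasDerivAt_pi.mpr (fun i => hderiv t i))).hasDerivWithinAt
  have hmv := (convex_Icc (0:ℝ) 1).norm_image_sub_le_of_norm_hasDerivWithin_le hG
      (fun t _ => by rw [hnorm]; exact hbound t)
      (Set.left_mem_Icc.mpr zero_le_one) (Set.right_mem_Icc.mpr zero_le_one)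
  have hkey : ∑ i, |g 1 i - g 0 i| ≤ d := by
    have : e (g 1) - e (g 0) = e (g 1 - g 0) := (map_sub e _ _).symm
    calc ∑ i, |g 1 i - g 0 i| = ‖e (g 1 - g 0)‖ := by
          rw [hnorm]; rfl
    _ = ‖e (g 1) - e (g 0)‖ := by rw [this]
    _ ≤ d * ‖(1:ℝ) - 0‖ := hmv
    _ = d := by norm_num
  have h1 : ∀ i, g 1 i = softmax x i := by
    intro i
    simp only [hg', hS', hv', softmax, one_mul]
    norm_num
  have h0 : ∀ i, g 0 i = softmax y i := by
    intro i
    simp only [hg', hS', hv', softmax, zero_mul, add_zero]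
  calc ∑ i, |softmax x i - softmax y i| = ∑ i, |g 1 i - g 0 i| := by
        apply Finset.sum_congr rfl
        intro i _
        rw [h1 i, h0 i]
  _ ≤ d := hkey
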